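/- The dimension-2 cohomology with ℤ/2 coefficients of the wreath-product group W_4 = (ℤ/2)^4 ⋊ S_4 (signed permutation group on 4 elements) has F₂-dimension at least 5; in particular H²(W_4; ℤ/2) is not isomorphic to (ℤ/2)². -/

import Mathlib

open Multiplicative

/-- The permutation `σ ∈ S₄` acting on `(ℤ/2)⁴` (written multiplicatively) by
permuting coordinates. -/
def permAut (σ : Equiv.Perm (Fin 4)) :
    Multiplicative (Fin 4 → ZMod 2) ≃* Multiplicative (Fin 4 → ZMod 2) where
  toFun f := ofAdd (fun i => toAdd f (σ.symm i))
  invFun f := ofAdd (fun i => toAdd f (σ i))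
  left_inv f := by simp
  right_inv f := by simp
  map_mul' f g := rfl

/-- The action homomorphism `S₄ →* Aut((ℤ/2)⁴)` by permuting coordinates. -/
def permHom : Equiv.Perm (Fin 4) →* MulAut (Multiplicative (Fin 4 → ZMod 2)) where
  toFun σ := permAut σ
  map_one' := by ext f; rfl
  map_mul' σ τ := by ext f; rfl

/-- The signed permutation group `W₄ = (ℤ/2)⁴ ⋊ S₄`. -/
abbrev W4 : Type :=
  SemidirectProduct (Multiplicative (Fin 4 → ZMod 2)) (Equiv.Perm (Fin 4)) permHom

noncomputable section

/-! ### Auxiliary definitions -/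

abbrev P4 := Equiv.Perm (Fin 4)
abbrev Vf := Fin 4 → ZMod 2

/-- coordinate-permutation action on `Vf`. -/
def pact (ρ : P4) (v : Vf) : Vf := fun i => v (ρ⁻¹ i)

def lv (g : W4) : Vf := toAdd g.left
def rp (g : W4) : P4 := g.right

lemma lv_mul (g h : W4) : lv (g * h) = lv g + pact (rp g) (lv h) := rfl
lemma rp_mul (g h : W4) : rp (g * h) = rp g * rp h := rfl

def Sv (v : Vf) : ZMod 2 := v 0 + v 1 + v 2 + v 3

/-- inversion indicator -/
def uf (ρ : P4) (i j : Fin 4) : ZMod 2 := if ρ j < ρ i then 1 else 0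

def sgnb (ρ : P4) : ZMod 2 :=
  uf ρ 0 1 + uf ρ 0 2 + uf ρ 0 3 + uf ρ 1 2 + uf ρ 1 3 + uf ρ 2 3

def af (x y : Vf) : ZMod 2 :=
  x 1 * y 0 + x 2 * y 0 + x 2 * y 1 + x 3 * y 0 + x 3 * y 1 + x 3 * y 2

def Nf (ρ : P4) (v : Vf) : ZMod 2 :=
  v 0 * v 1 * uf ρ 0 1 + v 0 * v 2 * uf ρ 0 2 + v 0 * v 3 * uf ρ 0 3 +
  v 1 * v 2 * uf ρ 1 2 + v 1 * v 3 * uf ρ 1 3 + v 2 * v 3 * uf ρ 2 3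

/-! ### matrices over `ZMod 3` for the binary octahedral cocycle -/

structure M2 where
  a : ZMod 3
  b : ZMod 3
  c : ZMod 3
  d : ZMod 3
deriving DecidableEq

def m2 (A B : M2) : M2 :=
  ⟨A.a * B.a + A.b * B.c, A.a * B.b + A.b * B.d,
   A.c * B.a + A.d * B.c, A.c * B.b + A.d * B.d⟩

def m2neg (A : M2) : M2 := ⟨-A.a, -A.b, -A.c, -A.d⟩

def smul3 (c : ZMod 3) (A : M2) : M2 := ⟨c * A.a, c * A.b, c * A.c, c * A.d⟩

lemma m2assoc (A B C : M2) : m2 (m2 A B) C = m2 A (m2 B C) := by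
  simp only [m2, M2.mk.injEq]
  refine ⟨by ring, by ring, by ring, by ring⟩

lemma smul3_one (A : M2) : smul3 1 A = A := by
  simp only [smul3, one_mul]

lemma smul3_neg_one (A : M2) : smul3 (-1) A = m2neg A := by
  simp only [smul3, m2neg, neg_one_mul]

lemma smul3_mul_left (c : ZMod 3) (A B : M2) : m2 (smul3 c A) B = smul3 c (m2 A B) := by
  simp only [m2, smul3, M2.mk.injEq]
  refine ⟨by ring, by ring, by ring, by ring⟩

lemma smul3_mul_right (c : ZMod 3) (A B : M2) : m2 A (smul3 c B) = smul3 c (m2 A B) := by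
  simp only [m2, smul3, M2.mk.injEq]
  refine ⟨by ring, by ring, by ring, by ring⟩

lemma smul3_smul3 (c d : ZMod 3) (A : M2) : smul3 c (smul3 d A) = smul3 (c * d) A := by
  simp only [smul3, M2.mk.injEq]
  refine ⟨by ring, by ring, by ring, by ring⟩

/-- table of lifts of the 24 permutations to `GL(2,3)` (a section of the double cover
`GL(2,3) → PGL(2,3) ≅ S₄`). -/
def tab : ℕ → M2
  | 7 => ⟨1, 0, 0, 1⟩
  | 8 => ⟨1, 0, 0, 2⟩
  | 11 => ⟨1, 2, 0, 2⟩
  | 13 => ⟨1, 1, 0, 1⟩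
  | 16 => ⟨1, 2, 0, 1⟩
  | 17 => ⟨1, 1, 0, 2⟩
  | 27 => ⟨0, 1, 1, 0⟩
  | 28 => ⟨0, 1, 2, 0⟩
  | 35 => ⟨0, 1, 2, 1⟩
  | 38 => ⟨0, 1, 1, 1⟩
  | 40 => ⟨0, 1, 1, 2⟩
  | 42 => ⟨0, 1, 2, 2⟩
  | 51 => ⟨1, 2, 1, 0⟩
  | 53 => ⟨1, 1, 1, 0⟩
  | 55 => ⟨1, 0, 1, 2⟩
  | 58 => ⟨1, 0, 1, 1⟩
  | 65 => ⟨1, 1, 1, 2⟩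
  | 66 => ⟨1, 2, 1, 1⟩
  | 76 => ⟨1, 2, 2, 0⟩
  | 77 => ⟨1, 1, 2, 0⟩
  | 80 => ⟨1, 0, 2, 1⟩
  | 82 => ⟨1, 0, 2, 2⟩
  | 85 => ⟨1, 1, 2, 1⟩
  | 86 => ⟨1, 2, 2, 2⟩
  | _ => ⟨1, 0, 0, 1⟩

def Tt (σ : P4) : M2 := tab ((σ 0).val * 25 + (σ 1).val * 5 + (σ 2).val)

def sgn3 (ρ σ : P4) : ZMod 3 := if m2 (Tt ρ) (Tt σ) = Tt (ρ * σ) then 1 else -1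

def c6 (ρ σ : P4) : ZMod 2 := if m2 (Tt ρ) (Tt σ) = Tt (ρ * σ) then 0 else 1

/-! ### The five cocycles -/

def F1 : W4 × W4 → ZMod 2 := fun p => Sv (lv p.1) * Sv (lv p.2)
def F2 : W4 × W4 → ZMod 2 := fun p => Sv (lv p.1) * sgnb (rp p.2)
def F3 : W4 × W4 → ZMod 2 := fun p => sgnb (rp p.1) * sgnb (rp p.2)
def F5 : W4 × W4 → ZMod 2 := fun p =>
  af (lv p.1) (pact (rp p.1) (lv p.2)) + Nf (rp p.1) (lv p.2)
def F6 : W4 × W4 → ZMod 2 := fun p => c6 (rp p.1) (rp p.2)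

/-! ### decidable component facts -/

set_option maxHeartbeats 4000000

lemma D1 : ∀ ρ σ : P4, sgnb (ρ * σ) = sgnb ρ + sgnb σ := by decide

lemma D2 : ∀ (ρ : P4) (v : Vf), Sv (pact ρ v) = Sv v := by decide

lemma D4 : ∀ (ρ σ : P4) (w : Vf), Nf (ρ * σ) w = Nf σ w + Nf ρ (pact σ w) := by decide

lemma D5 : ∀ (ρ : P4) (v y : Vf),
    af (pact ρ v) (pact ρ y) + af v y = Nf ρ (v + y) + Nf ρ v + Nf ρ y := by decide

lemma Hpm : ∀ ρ σ : P4,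
    m2 (Tt ρ) (Tt σ) = Tt (ρ * σ) ∨ m2 (Tt ρ) (Tt σ) = m2neg (Tt (ρ * σ)) := by decide

lemma Hne : ∀ ρ : P4, Tt ρ ≠ m2neg (Tt ρ) := by decide

/-! ### symbolic component facts -/

lemma Sv_add (v w : Vf) : Sv (v + w) = Sv v + Sv w := by
  simp only [Sv, Pi.add_apply]; ring

lemma af_add_left (x y z : Vf) : af (x + y) z = af x z + af y z := by
  simp only [af, Pi.add_apply]; ring

lemma af_add_right (x y z : Vf) : af x (y + z) = af x y + af x z := by
  simp only [af, Pi.add_apply]; ring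

lemma SW (g h : W4) : Sv (lv (g * h)) = Sv (lv g) + Sv (lv h) := by
  rw [lv_mul, Sv_add, D2]

lemma pact_mul (ρ σ : P4) (w : Vf) : pact (ρ * σ) w = pact ρ (pact σ w) := by
  funext i
  simp [pact, mul_inv_rev, Equiv.Perm.mul_apply]

lemma pact_add (ρ : P4) (v w : Vf) : pact ρ (v + w) = pact ρ v + pact ρ w := rfl

/-! ### the `c6` cocycle identity -/

lemma hTT (ρ σ : P4) : m2 (Tt ρ) (Tt σ) = smul3 (sgn3 ρ σ) (Tt (ρ * σ)) := by
  by_cases h : m2 (Tt ρ) (Tt σ) = Tt (ρ * σ)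
  · rw [sgn3, if_pos h, smul3_one]; exact h
  · rw [sgn3, if_neg h, smul3_neg_one]
    exact (Hpm ρ σ).resolve_left h

lemma sgn3_assoc (ρ σ τ : P4) :
    sgn3 ρ σ * sgn3 (ρ * σ) τ = sgn3 σ τ * sgn3 ρ (σ * τ) := by
  have h1 : m2 (m2 (Tt ρ) (Tt σ)) (Tt τ)
      = smul3 (sgn3 ρ σ * sgn3 (ρ * σ) τ) (Tt (ρ * σ * τ)) := by
    rw [hTT ρ σ, smul3_mul_left, hTT (ρ * σ) τ, smul3_smul3]
  have h2 : m2 (m2 (Tt ρ) (Tt σ)) (Tt τ)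
      = smul3 (sgn3 σ τ * sgn3 ρ (σ * τ)) (Tt (ρ * σ * τ)) := by
    rw [m2assoc, hTT σ τ, smul3_mul_right, hTT ρ (σ * τ), smul3_smul3, mul_assoc ρ σ τ]
  have h3 := h1.symm.trans h2
  have hca : sgn3 ρ σ * sgn3 (ρ * σ) τ = 1 ∨ sgn3 ρ σ * sgn3 (ρ * σ) τ = -1 := by
    unfold sgn3; split_ifs <;> decide
  have hcb : sgn3 σ τ * sgn3 ρ (σ * τ) = 1 ∨ sgn3 σ τ * sgn3 ρ (σ * τ) = -1 := by
    unfold sgn3; split_ifs <;> decide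
  rcases hca with hc | hc <;> rcases hcb with hd | hd <;> rw [hc, hd] at h3
  · rw [hc, hd]
  · rw [smul3_one, smul3_neg_one] at h3
    exact absurd h3 (Hne _)
  · rw [smul3_one, smul3_neg_one] at h3
    exact absurd h3.symm (Hne _)
  · rw [hc, hd]

lemma c6_eq (ρ σ : P4) : c6 ρ σ = if sgn3 ρ σ = 1 then 0 else 1 := by
  unfold c6 sgn3
  split_ifs with h h2 h3
  · rfl
  · exact absurd rfl h2
  · exact absurd h3 (by decide)
  · rfl

lemma c6_assoc (ρ σ τ : P4) : c6 ρ σ + c6 (ρ * σ) τ = c6 σ τ + c6 ρ (σ * τ) := by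
  have h := sgn3_assoc ρ σ τ
  rw [c6_eq, c6_eq, c6_eq, c6_eq]
  rcases (by unfold sgn3; split_ifs <;> simp : sgn3 ρ σ = 1 ∨ sgn3 ρ σ = -1) with h1 | h1 <;>
  rcases (by unfold sgn3; split_ifs <;> simp : sgn3 (ρ * σ) τ = 1 ∨ sgn3 (ρ * σ) τ = -1)
    with h2 | h2 <;>
  rcases (by unfold sgn3; split_ifs <;> simp : sgn3 σ τ = 1 ∨ sgn3 σ τ = -1) with h3 | h3 <;>
  rcases (by unfold sgn3; split_ifs <;> simp : sgn3 ρ (σ * τ) = 1 ∨ sgn3 ρ (σ * τ) = -1)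
    with h4 | h4 <;>
  rw [h1, h2, h3, h4] at h ⊢ <;> first
    | decide
    | (exact absurd h (by decide))

lemma c6_cocycle (ρ σ τ : P4) : c6 σ τ - c6 (ρ * σ) τ + c6 ρ (σ * τ) - c6 ρ σ = 0 := by
  have h := c6_assoc ρ σ τ
  have key : ∀ x y z t : ZMod 2, x + y = z + t → z - y + t - x = 0 := by decide
  exact key _ _ _ _ h

/-! ### the `F5` cocycle identity -/

lemma key5 : ∀ A1 A2 A3 A4 A5 A6 A7 A8 : ZMod 2, A4 + A1 = A7 + A8 + A6 →
    (A1 + A2) - (A3 + A4 + (A2 + A6)) + (A5 + A3 + A7) - (A5 + A8) = 0 := by decide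

lemma F5core (u v w : Vf) (ρ σ : P4) :
    (af v (pact σ w) + Nf σ w)
      - (af (u + pact ρ v) (pact (ρ * σ) w) + Nf (ρ * σ) w)
      + (af u (pact ρ (v + pact σ w)) + Nf ρ (v + pact σ w))
      - (af u (pact ρ v) + Nf ρ v) = 0 := by
  rw [pact_mul ρ σ w, pact_add ρ v (pact σ w), af_add_left, af_add_right, D4 ρ σ w]
  exact key5 _ _ _ _ _ _ _ _ (D5 ρ v (pact σ w))

/-! ### the cocycle membership proofs -/

open groupCohomology

abbrev Atriv : Rep (ZMod 2) W4 := Rep.trivial (ZMod 2) W4 (ZMod 2)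

def B2 : Submodule (ZMod 2) (cocycles₂ Atriv) :=
  (coboundaries₂ Atriv).comap (cocycles₂ Atriv).subtype

abbrev H2Q := cocycles₂ Atriv ⧸ B2

lemma hkerπ : B2 = LinearMap.ker (H2π Atriv).hom := by
  ext x
  rw [LinearMap.mem_ker]
  exact (H2π_eq_zero_iff x).symm

lemma hπsurj : Function.Surjective (H2π Atriv).hom :=
  (ModuleCat.epi_iff_surjective _).1 inferInstance

def eQ : H2Q ≃ₗ[ZMod 2] H2 Atriv :=
  (Submodule.quotEquivOfEq _ _ hkerπ).trans (LinearMap.quotKerEquivOfSurjective _ hπsurj)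

lemma memF1 : F1 ∈ cocycles₂ Atriv := by
  rw [mem_cocycles₂_def]
  intro g h j
  simp only [Rep.trivial_ρ_apply]
  show Sv (lv h) * Sv (lv j) - Sv (lv (g * h)) * Sv (lv j)
      + Sv (lv g) * Sv (lv (h * j)) - Sv (lv g) * Sv (lv h) = 0
  rw [SW g h, SW h j]; ring

lemma memF2 : F2 ∈ cocycles₂ Atriv := by
  rw [mem_cocycles₂_def]
  intro g h j
  simp only [Rep.trivial_ρ_apply]
  show Sv (lv h) * sgnb (rp j) - Sv (lv (g * h)) * sgnb (rp j)
      + Sv (lv g) * sgnb (rp (h * j)) - Sv (lv g) * sgnb (rp h) = 0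
  rw [SW g h, rp_mul h j, D1]; ring

lemma memF3 : F3 ∈ cocycles₂ Atriv := by
  rw [mem_cocycles₂_def]
  intro g h j
  simp only [Rep.trivial_ρ_apply]
  show sgnb (rp h) * sgnb (rp j) - sgnb (rp (g * h)) * sgnb (rp j)
      + sgnb (rp g) * sgnb (rp (h * j)) - sgnb (rp g) * sgnb (rp h) = 0
  rw [rp_mul g h, rp_mul h j, D1, D1]; ring

lemma memF5 : F5 ∈ cocycles₂ Atriv := by
  rw [mem_cocycles₂_def]
  intro g h j
  simp only [Rep.trivial_ρ_apply]
  show (af (lv h) (pact (rp h) (lv j)) + Nf (rp h) (lv j))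
      - (af (lv (g * h)) (pact (rp (g * h)) (lv j)) + Nf (rp (g * h)) (lv j))
      + (af (lv g) (pact (rp g) (lv (h * j))) + Nf (rp g) (lv (h * j)))
      - (af (lv g) (pact (rp g) (lv h)) + Nf (rp g) (lv h)) = 0
  rw [lv_mul g h, rp_mul g h, lv_mul h j]
  exact F5core (lv g) (lv h) (lv j) (rp g) (rp h)

lemma memF6 : F6 ∈ cocycles₂ Atriv := by
  rw [mem_cocycles₂_def]
  intro g h j
  simp only [Rep.trivial_ρ_apply]
  show c6 (rp h) (rp j) - c6 (rp (g * h)) (rp j)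
      + c6 (rp g) (rp (h * j)) - c6 (rp g) (rp h) = 0
  rw [rp_mul g h, rp_mul h j]
  exact c6_cocycle (rp g) (rp h) (rp j)









/-! ### explicit elements of `W4` -/

def g1 : W4 := ⟨ofAdd ![0,0,0,1], 1⟩
def xc : W4 := ⟨1, Equiv.swap 2 3⟩
def yc : W4 := ⟨ofAdd ![0,1,0,0], 1⟩
def zc : W4 := ⟨ofAdd ![0,1,0,0], Equiv.swap 2 3⟩
def g4 : W4 := ⟨ofAdd ![0,0,0,1], Equiv.swap 2 3⟩
def g4b : W4 := ⟨ofAdd ![0,0,1,1], 1⟩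
def g4c : W4 := ⟨ofAdd ![0,0,1,0], Equiv.swap 2 3⟩
def g5 : W4 := ⟨1, Equiv.swap 0 1 * Equiv.swap 2 3⟩

lemma hg1 : g1 * g1 = 1 := by
  apply SemidirectProduct.ext <;> decide

lemma hxy : xc * yc = zc := by
  apply SemidirectProduct.ext <;> decide

lemma hyx : yc * xc = zc := by
  apply SemidirectProduct.ext <;> decide

lemma hxc : xc * xc = 1 := by
  apply SemidirectProduct.ext <;> decide

lemma hg4a : g4 * g4 = g4b := by
  apply SemidirectProduct.ext <;> decide

lemma hg4b : g4b * g4 = g4c := by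
  apply SemidirectProduct.ext <;> decide

lemma hg4c : g4c * g4 = 1 := by
  apply SemidirectProduct.ext <;> decide

lemma hg5 : g5 * g5 = 1 := by
  apply SemidirectProduct.ext <;> decide

/-! ### the five functionals -/

def Lproj (p : W4 × W4) : ((W4 × W4 → ZMod 2) →ₗ[ZMod 2] ZMod 2) :=
  LinearMap.proj p

def L1 := Lproj (1, g1) + Lproj (g1, g1)
def L2 := Lproj (xc, yc) + Lproj (yc, xc)
def L3 := Lproj (1, xc) + Lproj (xc, xc)
def L4 := Lproj (1, g4) + Lproj (g4, g4) + Lproj (g4b, g4) + Lproj (g4c, g4)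
def L5 := Lproj (1, g5) + Lproj (g5, g5)

/-! ### vanishing on coboundaries -/

lemma van2 : ∀ p q : ZMod 2, (q - q + p) + (q - p + q) = 0 := by decide
lemma van2' : ∀ p q r : ZMod 2, (q - r + p) + (p - r + q) = 0 := by decide
lemma van4 : ∀ p a b c : ZMod 2, (a - a + p) + (a - b + a) + (a - c + b) + (a - p + c) = 0 := by
  decide

lemma hker1 :
    B2 ≤ LinearMap.ker (L1.comp (cocycles₂ Atriv).subtype) := by
  intro f hf
  rw [LinearMap.mem_ker, LinearMap.comp_apply]
  obtain ⟨x, hx⟩ := hf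
  have h0 : L1 ((d₁₂ Atriv).hom x) = 0 := by
    simp only [L1, Lproj, LinearMap.add_apply, LinearMap.proj_apply, d₁₂_hom_apply,
      Rep.trivial_ρ_apply]
    rw [one_mul, hg1]
    exact van2 (x 1) (x g1)
  exact hx ▸ h0

lemma hker2 :
    B2 ≤ LinearMap.ker (L2.comp (cocycles₂ Atriv).subtype) := by
  intro f hf
  rw [LinearMap.mem_ker, LinearMap.comp_apply]
  obtain ⟨x, hx⟩ := hf
  have h0 : L2 ((d₁₂ Atriv).hom x) = 0 := by
    simp only [L2, Lproj, LinearMap.add_apply, LinearMap.proj_apply, d₁₂_hom_apply,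
      Rep.trivial_ρ_apply]
    rw [hxy, hyx]
    exact van2' (x xc) (x yc) (x zc)
  exact hx ▸ h0

lemma hker3 :
    B2 ≤ LinearMap.ker (L3.comp (cocycles₂ Atriv).subtype) := by
  intro f hf
  rw [LinearMap.mem_ker, LinearMap.comp_apply]
  obtain ⟨x, hx⟩ := hf
  have h0 : L3 ((d₁₂ Atriv).hom x) = 0 := by
    simp only [L3, Lproj, LinearMap.add_apply, LinearMap.proj_apply, d₁₂_hom_apply,
      Rep.trivial_ρ_apply]
    rw [one_mul, hxc]
    exact van2 (x 1) (x xc)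
  exact hx ▸ h0

lemma hker4 :
    B2 ≤ LinearMap.ker (L4.comp (cocycles₂ Atriv).subtype) := by
  intro f hf
  rw [LinearMap.mem_ker, LinearMap.comp_apply]
  obtain ⟨x, hx⟩ := hf
  have h0 : L4 ((d₁₂ Atriv).hom x) = 0 := by
    simp only [L4, Lproj, LinearMap.add_apply, LinearMap.proj_apply, d₁₂_hom_apply,
      Rep.trivial_ρ_apply]
    rw [one_mul, hg4a, hg4b, hg4c]
    exact van4 (x 1) (x g4) (x g4b) (x g4c)
  exact hx ▸ h0

lemma hker5 :
    B2 ≤ LinearMap.ker (L5.comp (cocycles₂ Atriv).subtype) := by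
  intro f hf
  rw [LinearMap.mem_ker, LinearMap.comp_apply]
  obtain ⟨x, hx⟩ := hf
  have h0 : L5 ((d₁₂ Atriv).hom x) = 0 := by
    simp only [L5, Lproj, LinearMap.add_apply, LinearMap.proj_apply, d₁₂_hom_apply,
      Rep.trivial_ρ_apply]
    rw [one_mul, hg5]
    exact van2 (x 1) (x g5)
  exact hx ▸ h0









def cF : Fin 5 → cocycles₂ Atriv :=
  ![⟨F1, memF1⟩, ⟨F2, memF2⟩, ⟨F3, memF3⟩, ⟨F5, memF5⟩, ⟨F6, memF6⟩]

def Lv : Fin 5 → ((W4 × W4 → ZMod 2) →ₗ[ZMod 2] ZMod 2) := ![L1, L2, L3, L4, L5]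

lemma hkerv : ∀ i, B2 ≤
    LinearMap.ker ((Lv i).comp (cocycles₂ Atriv).subtype) := by
  intro i
  fin_cases i
  · exact hker1
  · exact hker2
  · exact hker3
  · exact hker4
  · exact hker5

set_option maxHeartbeats 1000000 in
lemma hmat : ∀ i j, (Lv i).comp (cocycles₂ Atriv).subtype (cF j)
    = if i = j then 1 else 0 := by
  intro i j
  fin_cases i <;> fin_cases j <;>
    simp only [Lv, cF, Matrix.cons_val_zero, Matrix.cons_val_one, Matrix.head_cons,
      Matrix.cons_val_two, Matrix.tail_cons, Matrix.cons_val_three, Matrix.cons_val_four,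
      LinearMap.comp_apply, Submodule.coe_subtype, LinearMap.add_apply, L1, L2, L3, L4, L5,
      Lproj, LinearMap.proj_apply] <;> decide

def Phi : H2Q →ₗ[ZMod 2] (Fin 5 → ZMod 2) :=
  LinearMap.pi (fun i =>
    Submodule.liftQ _ ((Lv i).comp (cocycles₂ Atriv).subtype) (hkerv i))

lemma hsurj : Function.Surjective Phi := by
  intro x
  refine ⟨Submodule.Quotient.mk (∑ j : Fin 5, x j • cF j), ?_⟩
  funext i
  show Submodule.liftQ _ ((Lv i).comp (cocycles₂ Atriv).subtype) (hkerv i)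
      (Submodule.Quotient.mk (∑ j : Fin 5, x j • cF j)) = x i
  rw [Submodule.liftQ_apply, map_sum]
  simp only [map_smul, hmat i, smul_eq_mul, mul_ite, mul_one, mul_zero]
  rw [Finset.sum_ite_eq]
  simp

/-- The second cohomology `H²(W₄; F₂)` of the signed permutation group
`W₄ = (ℤ/2)⁴ ⋊ S₄` with (trivial) `F₂`-coefficients has `F₂`-dimension at least `5`;
in particular it is not isomorphic to `(ℤ/2)²`. -/
theorem h2_W4_rank_ge_five :
    5 ≤ Module.rank (ZMod 2)
        (groupCohomology (Rep.trivial (ZMod 2) W4 (ZMod 2)) 2) ∧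
    IsEmpty ((groupCohomology (Rep.trivial (ZMod 2) W4 (ZMod 2)) 2) ≃ₗ[ZMod 2]
        (ZMod 2 × ZMod 2)) := by
  have e := eQ.symm
  have hrank : (5 : Cardinal) ≤ Module.rank (ZMod 2)
      (groupCohomology (Rep.trivial (ZMod 2) W4 (ZMod 2)) 2) := by
    have h1 : Module.rank (ZMod 2) (Fin 5 → ZMod 2)
        ≤ Module.rank (ZMod 2) H2Q :=
      LinearMap.rank_le_of_surjective Phi hsurj
    have h2 : Module.rank (ZMod 2) (Fin 5 → ZMod 2) = 5 := by
      rw [rank_fin_fun]; norm_num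
    have h3 := e.rank_eq
    rw [h2] at h1
    exact h1.trans_eq h3.symm
  refine ⟨hrank, ⟨fun eq2 => ?_⟩⟩
  have h4 : Module.rank (ZMod 2)
      (groupCohomology (Rep.trivial (ZMod 2) W4 (ZMod 2)) 2) = 2 := by
    rw [eq2.rank_eq, rank_prod', Module.rank_self]
    norm_num
  rw [h4] at hrank
  have : (5 : ℕ) ≤ 2 := by exact_mod_cast hrank
  omega


end
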